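/- Let q be an odd prime power, a_1,…,a_n distinct in F_q, v_i ∈ F_q^*, u_i = ∏_{j≠i}(a_i - a_j)^{-1}, and 1 ≤ m ≤ ⌊n/2⌋. Then GRS_m(a,v)^⊥ = GRS_{n-m}(a,v) (Euclidean dual) if and only if there exists λ ∈ F_q^* such that λ u_i = v_i^2 for all i = 1,…,n. -/

import Mathlib

open Polynomial

/-- The generalized Reed–Solomon code `GRS_k(a, v)` as a set of codewords. -/
def GRSset {F : Type*} [Field F] {n : ℕ} (a v : Fin n → F) (k : ℕ) :
    Set (Fin n → F) :=
  {c | ∃ f : Polynomial F, f.degree < (k : ℕ) ∧ c = fun i => v i * f.eval (a i)}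

section Aux

variable {F : Type*} [Field F] {n : ℕ}

/-- Evaluation map sending a polynomial to its (scaled) codeword. -/
noncomputable def GRSmap (a v : Fin n → F) : F[X] →ₗ[F] (Fin n → F) where
  toFun f := fun i => v i * f.eval (a i)
  map_add' f g := by funext i; simp [mul_add]
  map_smul' c f := by funext i; simp [mul_comm, mul_assoc, mul_left_comm]

@[simp] lemma GRSmap_apply (a v : Fin n → F) (f : F[X]) (i : Fin n) :
    GRSmap a v f i = v i * f.eval (a i) := rfl

/-- The GRS code as a submodule. -/
noncomputable def GRSsub (a v : Fin n → F) (k : ℕ) : Submodule F (Fin n → F) :=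
  (Polynomial.degreeLT F k).map (GRSmap a v)

lemma mem_GRSsub_iff {a v : Fin n → F} {k : ℕ} {c : Fin n → F} :
    c ∈ GRSsub a v k ↔ ∃ f : F[X], f.degree < (k : ℕ) ∧ c = fun i => v i * f.eval (a i) := by
  constructor
  · rintro ⟨f, hf, rfl⟩
    exact ⟨f, Polynomial.mem_degreeLT.mp hf, rfl⟩
  · rintro ⟨f, hf, rfl⟩
    exact ⟨f, Polynomial.mem_degreeLT.mpr hf, rfl⟩

lemma GRSset_eq_sub (a v : Fin n → F) (k : ℕ) : GRSset a v k = ↑(GRSsub a v k) := by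
  ext c
  simp [GRSset, mem_GRSsub_iff]

lemma finrank_GRSsub (a v : Fin n → F) (ha : Function.Injective a) (hv : ∀ i, v i ≠ 0)
    {k : ℕ} (hk : k ≤ n) : Module.finrank F (GRSsub a v k) = k := by
  classical
  set L : (Polynomial.degreeLT F k) →ₗ[F] (Fin n → F) :=
    (GRSmap a v).comp (Polynomial.degreeLT F k).subtype with hL
  have hrange : LinearMap.range L = GRSsub a v k := by
    rw [hL, LinearMap.range_comp, Submodule.range_subtype]; rfl
  have hinj : Function.Injective L := by
    rw [← LinearMap.ker_eq_bot, LinearMap.ker_eq_bot']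
    rintro ⟨f, hf⟩ hker
    have heval : ∀ i : Fin n, f.eval (a i) = 0 := by
      intro i
      have := congrFun hker i
      simpa [hL] using (mul_eq_zero.mp (by simpa [hL] using this)).resolve_left (hv i)
    have hf0 : f = 0 := by
      refine Polynomial.eq_zero_of_degree_lt_of_eval_index_eq_zero (v := a)
        Finset.univ ha.injOn ?_ (fun i _ => heval i)
      rw [Finset.card_fin]
      exact lt_of_lt_of_le (Polynomial.mem_degreeLT.mp hf) (by exact_mod_cast hk)
    exact Subtype.ext hf0
  have h1 : Module.finrank F (LinearMap.range L) = Module.finrank F (Polynomial.degreeLT F k) :=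
    LinearMap.finrank_range_of_inj hinj
  rw [hrange] at h1
  rw [h1, (Polynomial.degreeLTEquiv F k).finrank_eq, Module.finrank_fin_fun]

/-- The standard dot-product bilinear form. -/
noncomputable def dotB : LinearMap.BilinForm F (Fin n → F) :=
  LinearMap.mk₂ F (fun x y => ∑ i, x i * y i)
    (fun x x' y => by simp [add_mul, Finset.sum_add_distrib])
    (fun c x y => by simp [Finset.mul_sum, mul_assoc])
    (fun x y y' => by simp [mul_add, Finset.sum_add_distrib])
    (fun c x y => by simp [Finset.mul_sum, mul_assoc, mul_left_comm])

lemma dotB_apply (x y : Fin n → F) : dotB x y = ∑ i, x i * y i := rfl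

lemma dotB_symm (x y : Fin n → F) : dotB x y = dotB y x := by
  simp [dotB_apply, mul_comm]

lemma dotB_refl : (dotB (F := F) (n := n)).IsRefl := by
  intro x y h
  rwa [dotB_symm] at h

lemma dotB_nondeg : (dotB (F := F) (n := n)).Nondegenerate := by
  suffices hL : LinearMap.SeparatingLeft (dotB (F := F) (n := n)) from
    ⟨hL, fun y hy => hL y fun x => by rw [dotB_symm]; exact hy x⟩
  intro x h
  funext i
  have := h (Pi.single i 1)
  simp only [dotB_apply, Pi.single_apply, mul_ite, mul_one, mul_zero,
    Finset.sum_ite_eq', Finset.mem_univ, if_true] at this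
  simpa using this

/-- The key sum identity: `∑ u i * h (a i) = 0` for `deg h < n - 1`. -/
lemma key_sum (a : Fin n → F) (ha : Function.Injective a) (u : Fin n → F)
    (hu : ∀ i, u i = (∏ j ∈ Finset.univ.erase i, (a i - a j))⁻¹)
    (hn : 1 ≤ n) (h : F[X]) (hdeg : h.degree < ((n - 1 : ℕ) : WithBot ℕ)) :
    ∑ i, u i * h.eval (a i) = 0 := by
  classical
  have hinj : Set.InjOn a (Finset.univ : Finset (Fin n)) := ha.injOn
  have hcard : (Finset.univ : Finset (Fin n)).card = n := Finset.card_fin n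
  have hh : h = Lagrange.interpolate Finset.univ a fun i => h.eval (a i) := by
    apply Lagrange.eq_interpolate hinj
    rw [hcard]
    exact lt_of_lt_of_le hdeg (by exact_mod_cast Nat.sub_le n 1)
  have hzero : h.coeff (n - 1) = 0 := Polynomial.coeff_eq_zero_of_degree_lt hdeg
  have hc := congrArg (fun p : F[X] => p.coeff (n - 1)) hh
  simp only [Lagrange.interpolate_apply, Polynomial.finset_sum_coeff,
    Polynomial.coeff_C_mul, hzero] at hc
  have hbasis : ∀ i : Fin n, (Lagrange.basis Finset.univ a i).coeff (n - 1) = u i := by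
    intro i
    have hd : (Lagrange.basis Finset.univ a i).natDegree = n - 1 := by
      simpa [hcard] using Lagrange.natDegree_basis hinj (Finset.mem_univ i)
    rw [← hd, ← Polynomial.leadingCoeff, Lagrange.basis, Polynomial.leadingCoeff_prod, hu,
      ← Finset.prod_inv_distrib]
    refine Finset.prod_congr rfl fun j hj => ?_
    rw [Lagrange.basisDivisor, Polynomial.leadingCoeff_mul, Polynomial.leadingCoeff_C,
      (Polynomial.monic_X_sub_C (a j)).leadingCoeff, mul_one]
  calc ∑ i, u i * h.eval (a i)
      = ∑ i, h.eval (a i) * (Lagrange.basis Finset.univ a i).coeff (n - 1) := by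
        refine Finset.sum_congr rfl fun i _ => ?_
        rw [hbasis i, mul_comm]
    _ = 0 := hc.symm

/-- The classical dual of a GRS code. -/
lemma orth_GRS (a v u : Fin n → F) (ha : Function.Injective a) (hv : ∀ i, v i ≠ 0)
    (hu : ∀ i, u i = (∏ j ∈ Finset.univ.erase i, (a i - a j))⁻¹)
    (hune : ∀ i, u i ≠ 0) {k : ℕ} (hk1 : 1 ≤ k) (hk2 : k < n) :
    dotB.orthogonal (GRSsub a v k) = GRSsub a (fun i => u i / v i) (n - k) := by
  classical
  have hwne : ∀ i, u i / v i ≠ 0 := fun i => div_ne_zero (hune i) (hv i)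
  have hn1 : 1 ≤ n := le_trans hk1 hk2.le
  have hle : GRSsub a (fun i => u i / v i) (n - k) ≤ dotB.orthogonal (GRSsub a v k) := by
    rintro x ⟨f, hf, rfl⟩
    rw [LinearMap.BilinForm.mem_orthogonal_iff]
    rintro y ⟨g, hg, rfl⟩
    show dotB _ _ = 0
    rw [dotB_apply]
    have hterm : ∀ i : Fin n,
        GRSmap a v g i * GRSmap a (fun i => u i / v i) f i = u i * (g * f).eval (a i) := by
      intro i
      simp only [GRSmap_apply, Polynomial.eval_mul]
      calc v i * Polynomial.eval (a i) g * (u i / v i * Polynomial.eval (a i) f)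
          = (v i / v i) * (u i * (Polynomial.eval (a i) g * Polynomial.eval (a i) f)) := by
            ring
        _ = u i * (Polynomial.eval (a i) g * Polynomial.eval (a i) f) := by
            rw [div_self (hv i), one_mul]
    rw [Finset.sum_congr rfl fun i _ => hterm i]
    apply key_sum a ha u hu hn1
    rcases eq_or_ne (g * f) 0 with h0 | h0
    · rw [h0, Polynomial.degree_zero]
      exact WithBot.bot_lt_coe _
    · rw [← Polynomial.natDegree_lt_iff_degree_lt h0]
      have hg0 : g ≠ 0 := fun hh => h0 (by rw [hh, zero_mul])
      have hf0 : f ≠ 0 := fun hh => h0 (by rw [hh, mul_zero])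
      have hgd : g.natDegree < k := by
        rw [Polynomial.natDegree_lt_iff_degree_lt hg0]
        exact Polynomial.mem_degreeLT.mp hg
      have hfd : f.natDegree < n - k := by
        rw [Polynomial.natDegree_lt_iff_degree_lt hf0]
        exact Polynomial.mem_degreeLT.mp hf
      rw [Polynomial.natDegree_mul hg0 hf0]
      omega
  refine (Submodule.eq_of_le_of_finrank_le hle ?_).symm
  rw [finrank_GRSsub a _ ha hwne (Nat.sub_le n k),
    LinearMap.BilinForm.finrank_orthogonal dotB_nondeg,
    finrank_GRSsub a v ha hv hk2.le, Module.finrank_fin_fun]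

/-- Scaling the column multipliers by a nonzero constant does not change the code. -/
lemma GRSsub_smul (a v : Fin n → F) (c : F) (hc : c ≠ 0) (k : ℕ) :
    GRSsub a (fun i => c * v i) k = GRSsub a v k := by
  have key : ∀ (d : F), d ≠ 0 → ∀ w : Fin n → F,
      GRSsub a (fun i => d * w i) k ≤ GRSsub a w k := by
    intro d hd w
    rintro x ⟨f, hf, rfl⟩
    have hf' : f.degree < (k : ℕ) := Polynomial.mem_degreeLT.mp hf
    refine ⟨Polynomial.C d * f, Polynomial.mem_degreeLT.mpr ?_, ?_⟩
    · calc (Polynomial.C d * f).degree ≤ f.degree := by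
            rcases eq_or_ne f 0 with rfl | h0
            · simp
            · rw [Polynomial.degree_C_mul hd]
        _ < k := hf' 
    · funext i
      simp only [GRSmap_apply, Polynomial.eval_mul, Polynomial.eval_C]
      ring
  refine le_antisymm (key c hc v) ?_
  have := key c⁻¹ (inv_ne_zero hc) (fun i => c * v i)
  simpa [inv_mul_cancel_left₀ hc] using this

/-- If two GRS codes with the same evaluation points and small degree agree,
the multipliers are proportional. -/
lemma scalar_of_eq (a v w : Fin n → F) (ha : Function.Injective a) (hv : ∀ i, v i ≠ 0)
    {m : ℕ} (hm1 : 1 ≤ m) (hmn : 2 * m ≤ n)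
    (heq : GRSsub a w m = GRSsub a v m) :
    ∃ c : F, c ≠ 0 ∧ ∀ i, w i = c * v i := by
  classical
  have hn2 : 2 ≤ n := le_trans (by omega) hmn
  have hone : (1 : F[X]) ∈ Polynomial.degreeLT F m := by
    rw [Polynomial.mem_degreeLT, Polynomial.degree_one]
    exact_mod_cast hm1
  have hwmem : w ∈ GRSsub a v m := by
    rw [← heq]
    exact ⟨1, hone, by funext i; simp⟩
  have hvmem : v ∈ GRSsub a w m := by
    rw [heq]
    exact ⟨1, hone, by funext i; simp⟩
  obtain ⟨g, hg, hgw⟩ := hwmem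
  obtain ⟨h, hh, hhv⟩ := hvmem
  have heval : ∀ i : Fin n, (g * h).eval (a i) = 1 := by
    intro i
    have h1 : w i = v i * g.eval (a i) := (congrFun hgw i).symm
    have h2 : v i = w i * h.eval (a i) := (congrFun hhv i).symm
    have hvi : v i = v i * (g.eval (a i) * h.eval (a i)) := by
      rw [← mul_assoc, ← h1, ← h2]
    have h3 : g.eval (a i) * h.eval (a i) = 1 :=
      mul_left_cancel₀ (hv i) (by rw [mul_one]; exact hvi.symm)
    rw [Polynomial.eval_mul]; exact h3
  have hg0 : g ≠ 0 := by
    intro h0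
    have := heval ⟨0, by omega⟩
    rw [h0, zero_mul, Polynomial.eval_zero] at this
    exact one_ne_zero this.symm
  have hh0 : h ≠ 0 := by
    intro h0
    have := heval ⟨0, by omega⟩
    rw [h0, mul_zero, Polynomial.eval_zero] at this
    exact one_ne_zero this.symm
  have hgh : g * h = 1 := by
    refine Polynomial.eq_of_degrees_lt_of_eval_index_eq (Finset.univ : Finset (Fin n))
      ha.injOn ?_ ?_ ?_
    · rw [Finset.card_fin, ← Polynomial.natDegree_lt_iff_degree_lt (mul_ne_zero hg0 hh0),
        Polynomial.natDegree_mul hg0 hh0]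
      have hgd : g.natDegree < m := by
        rw [Polynomial.natDegree_lt_iff_degree_lt hg0]
        exact Polynomial.mem_degreeLT.mp hg
      have hhd : h.natDegree < m := by
        rw [Polynomial.natDegree_lt_iff_degree_lt hh0]
        exact Polynomial.mem_degreeLT.mp hh
      omega
    · rw [Finset.card_fin, Polynomial.degree_one]
      exact_mod_cast (by omega : 0 < n)
    · intro i _
      rw [heval i, Polynomial.eval_one]
  obtain ⟨c, hcu, hcg⟩ := Polynomial.isUnit_iff.mp (IsUnit.of_mul_eq_one h hgh)
  refine ⟨c, hcu.ne_zero, fun i => ?_⟩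
  have h1 : w i = v i * g.eval (a i) := (congrFun hgw i).symm
  rw [h1, ← hcg, Polynomial.eval_C, mul_comm]

end Aux

theorem GRS_euclidean_dual_iff (q n m : ℕ) (hq : IsPrimePow q) (hqodd : Odd q)
    (F : Type*) [Field F] [Fintype F] (hcard : Fintype.card F = q)
    (a v : Fin n → F) (ha : Function.Injective a) (hv : ∀ i, v i ≠ 0)
    (u : Fin n → F) (hu : ∀ i, u i = (∏ j ∈ Finset.univ.erase i, (a i - a j))⁻¹)
    (hm1 : 1 ≤ m) (hm2 : m ≤ n / 2) :
    {x : Fin n → F | ∀ y ∈ GRSset a v m, ∑ i, x i * y i = 0} = GRSset a v (n - m) ↔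
      ∃ lam : F, lam ≠ 0 ∧ ∀ i, lam * u i = (v i) ^ 2 := by
  classical
  have hn2m : 2 * m ≤ n := by omega
  have hn2 : 2 ≤ n := by omega
  have hune : ∀ i, u i ≠ 0 := by
    intro i
    rw [hu]
    refine inv_ne_zero (Finset.prod_ne_zero_iff.mpr fun j hj => ?_)
    refine sub_ne_zero_of_ne fun hh => ?_
    exact (Finset.mem_erase.mp hj).1 (ha hh).symm
  have hwne : ∀ i, u i / v i ≠ 0 := fun i => div_ne_zero (hune i) (hv i)
  have hset : {x : Fin n → F | ∀ y ∈ GRSset a v m, ∑ i, x i * y i = 0}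
      = ↑(dotB.orthogonal (GRSsub a v m)) := by
    ext x
    simp only [Set.mem_setOf_eq, SetLike.mem_coe, LinearMap.BilinForm.mem_orthogonal_iff,
      GRSset_eq_sub, SetLike.mem_coe]
    constructor
    · intro hx y hy
      show dotB y x = 0
      rw [dotB_symm, dotB_apply]
      exact hx y hy
    · intro hx y hy
      have := hx y hy
      rw [dotB_symm, dotB_apply] at this
      exact this
  rw [hset, GRSset_eq_sub, SetLike.coe_set_eq]
  have hA1 : dotB.orthogonal (GRSsub a v m) = GRSsub a (fun i => u i / v i) (n - m) :=
    orth_GRS a v u ha hv hu hune hm1 (by omega)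
  constructor
  · intro hEq
    have h1 : GRSsub a (fun i => u i / v i) (n - m) = GRSsub a v (n - m) :=
      hA1.symm.trans hEq
    have h2 : dotB.orthogonal (GRSsub a (fun i => u i / v i) (n - m))
        = dotB.orthogonal (GRSsub a v (n - m)) := by rw [h1]
    have hA2 : dotB.orthogonal (GRSsub a (fun i => u i / v i) (n - m))
        = GRSsub a (fun i => u i / (u i / v i)) (n - (n - m)) :=
      orth_GRS a (fun i => u i / v i) u ha hwne hu hune (by omega) (by omega)
    have hA3 : dotB.orthogonal (GRSsub a v (n - m))
        = GRSsub a (fun i => u i / v i) (n - (n - m)) :=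
      orth_GRS a v u ha hv hu hune (by omega) (by omega)
    have hsimp : (fun i => u i / (u i / v i)) = v := by
      funext i
      rw [div_div_eq_mul_div, mul_comm, mul_div_assoc, div_self (hune i), mul_one]
    have hnm : n - (n - m) = m := by omega
    rw [hA2, hA3, hsimp, hnm] at h2
    obtain ⟨c, hc, hcw⟩ := scalar_of_eq a v (fun i => u i / v i) ha hv hm1 hn2m h2.symm
    refine ⟨c⁻¹, inv_ne_zero hc, fun i => ?_⟩
    have := hcw i
    rw [div_eq_iff (hv i)] at this
    rw [this]
    field_simp
  · rintro ⟨lam, hlam, hl⟩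
    rw [hA1]
    have hweq : (fun i => u i / v i) = fun i => lam⁻¹ * v i := by
      funext i
      have h1 : u i = lam⁻¹ * v i ^ 2 := by
        rw [← hl i]
        field_simp
      rw [h1, pow_two, ← mul_assoc, mul_div_assoc, div_self (hv i), mul_one]
    rw [hweq, GRSsub_smul a v lam⁻¹ (inv_ne_zero hlam) (n - m)]
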